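/- Let H be a digraph, let R be a closed reduced walk of even length in H based at a vertex h, and let P be a reduced walk of even length in H starting at h. If R satisfies the IN-zigzag pattern, then P satisfies the IN-zigzag pattern if and only if every reduced walk RⁿP ∈ π(H), n ∈ ℤ, satisfies the IN-zigzag pattern. (The analogous statement holds for the OUT-zigzag pattern.) -/

import Mathlib

namespace HRecoloring

/-- A digraph: a vertex type together with an arc relation. -/
structure Dgraph (V : Type) where
  Adj : V → V → Prop

variable {V X : Type}

/-- Adjacency in the underlying undirected graph. -/
def Dgraph.UAdj (G : Dgraph V) (u v : V) : Prop := G.Adj u v ∨ G.Adj v u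

/-- A digraph is loopless if it has no arc `v → v`. -/
def Dgraph.Loopless (G : Dgraph V) : Prop := ∀ v, ¬ G.Adj v v

/-- A digraph is reflexive if `v → v` for every vertex `v`. -/
def Dgraph.IsReflexive (G : Dgraph V) : Prop := ∀ v, G.Adj v v

/-- A symmetric digraph, which we identify with an undirected graph. -/
def Dgraph.IsSymmetric (G : Dgraph V) : Prop := ∀ u v, G.Adj u v → G.Adj v u

/-- The underlying undirected graph, as a symmetric digraph. -/
def Dgraph.usym (G : Dgraph V) : Dgraph V := ⟨fun u v => G.UAdj u v⟩

/-- A (di)graph homomorphism. -/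
def IsHom (G : Dgraph V) (H : Dgraph X) (f : V → X) : Prop :=
  ∀ ⦃u v⦄, G.Adj u v → H.Adj (f u) (f v)

/-- A walk from `a` to `b`, encoded by its list of successive vertices.
A walk in a digraph is a walk in its underlying undirected graph. -/
def IsWalk (G : Dgraph V) (a b : V) (l : List V) : Prop :=
  l ≠ [] ∧ l.head? = some a ∧ l.getLast? = some b ∧ l.Chain' G.UAdj

/-- Weak connectivity. -/
def Dgraph.WConn (G : Dgraph V) : Prop := ∀ u v : V, ∃ l, IsWalk G u v l

/-- Concatenation of two walks sharing an endpoint. -/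
def wcomp (l₁ l₂ : List V) : List V := l₁ ++ l₂.tail

/-- Number of edges of a walk. -/
def wlen (l : List V) : ℕ := l.length - 1

/-- One reduction step on walks: delete a backtracking pair `(x y)(y x)` or a
one-edge loop step `(x x)`. -/
def RStep (l l' : List V) : Prop :=
  (∃ (p s : List V) (x y : V), l = p ++ [x, y, x] ++ s ∧ l' = p ++ [x] ++ s) ∨
  (∃ (p s : List V) (x : V), l = p ++ [x, x] ++ s ∧ l' = p ++ [x] ++ s)

/-- Equality of walks in the fundamental groupoid `π(H)`: the equivalence
generated by reduction steps (two walks are equal in `π(H)` iff they reduce to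
the same reduced walk). -/
def PiEq (l l' : List V) : Prop := Relation.EqvGen RStep l l'

/-- A walk is reduced if no reduction step applies to it. -/
def IsReduced (l : List V) : Prop := ∀ l', ¬ RStep l l'

/-- A closed walk is cyclically reduced if it is reduced and its first and last
edges are not inverses of each other. -/
def IsCycReduced (l : List V) : Prop :=
  IsReduced l ∧ ∃ h : 2 ≤ l.length,
    l.get ⟨1, by omega⟩ ≠ l.get ⟨l.length - 2, by omega⟩

/-- `n`-fold concatenation of a closed walk `R` based at `h`. -/
def witer (R : List V) (h : V) : ℕ → List V
  | 0 => [h]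
  | n + 1 => wcomp R (witer R h n)

/-- `Rⁿ` for an integer `n`, for a closed walk `R` based at `h`; for `n < 0`
this is the `|n|`-fold concatenation of the reversed walk `R⁻¹`. -/
def zpowWalk (R : List V) (h : V) (n : ℤ) : List V :=
  if 0 ≤ n then witer R h n.toNat else witer R.reverse h (-n).toNat

/-- A walk is symmetric if every edge it traverses is a symmetric arc. -/
def IsSymWalk (H : Dgraph X) (l : List X) : Prop :=
  l.Chain' fun a b => H.Adj a b ∧ H.Adj b a

/-- The conjugated walk `α(W)⁻¹ · Q · β(W)`. -/
def conj (α β : V → X) (Wl : List V) (Q : List X) : List X :=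
  wcomp (wcomp (Wl.map α).reverse Q) (Wl.map β)

/-- Topological validity of a walk `Q` from `α q` to `β q`:
`β(C) = Q⁻¹ · α(C) · Q` in `π(H)` for every closed walk `C` at `q`. -/
def TopValid (G : Dgraph V) (H : Dgraph X) (α β : V → X) (q : V) (Q : List X) : Prop :=
  ∀ C : List V, IsWalk G q q C →
    PiEq (C.map β) (wcomp (wcomp Q.reverse (C.map α)) Q)

/-- IN-zigzag pattern `a₁ ← a₂ → a₃ ← … ← a_{n-1} → a_n`. -/
def INCompatible (H : Dgraph X) (l : List X) : Prop :=
  ∀ (i : ℕ) (h : i + 1 < l.length),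
    if i % 2 = 0 then H.Adj (l.get ⟨i + 1, h⟩) (l.get ⟨i, by omega⟩)
    else H.Adj (l.get ⟨i, by omega⟩) (l.get ⟨i + 1, h⟩)

/-- OUT-zigzag pattern `a₁ → a₂ ← a₃ → … → a_{n-1} ← a_n`. -/
def OUTCompatible (H : Dgraph X) (l : List X) : Prop :=
  ∀ (i : ℕ) (h : i + 1 < l.length),
    if i % 2 = 0 then H.Adj (l.get ⟨i, by omega⟩) (l.get ⟨i + 1, h⟩)
    else H.Adj (l.get ⟨i + 1, h⟩) (l.get ⟨i, by omega⟩)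

/-- A vertex is of type IN if it has an in-neighbor. -/
def TypeIN (G : Dgraph V) (v : V) : Prop := ∃ u, G.Adj u v

/-- A vertex is of type OUT if it has an out-neighbor. -/
def TypeOUT (G : Dgraph V) (v : V) : Prop := ∃ u, G.Adj v u

/-- A vertex is of type SYM if it is of type IN and of type OUT. -/
def TypeSYM (G : Dgraph V) (v : V) : Prop := TypeIN G v ∧ TypeOUT G v

/-- The zigzag condition for the vertex `v`. -/
def Zigzag (G : Dgraph V) (H : Dgraph X) (v : V) (l : List X) : Prop :=
  (TypeIN G v → INCompatible H l) ∧ (TypeOUT G v → OUTCompatible H l)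

/-- A recoloring sequence: a nonempty sequence of homomorphisms in which
consecutive homomorphisms differ on exactly one vertex. -/
def IsRecolSeq (G : Dgraph V) (H : Dgraph X) (σs : List (V → X)) : Prop :=
  σs ≠ [] ∧ (∀ σ ∈ σs, IsHom G H σ) ∧ σs.Chain' fun σ σ' => ∃! u, σ u ≠ σ' u

/-- The monochromatic neighborhood property: whenever a vertex changes its
color, all of its neighbors (in the underlying undirected graph) have one
common color. -/
def MonoNbhd (G : Dgraph V) (σs : List (V → X)) : Prop :=
  σs.Chain' fun σ σ' => ∀ v, σ v ≠ σ' v → ∃ h, ∀ w, G.UAdj v w → σ w = h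

/-- `VWalk G v σs S`: `S` is the vertex walk `S(v)` of the recoloring sequence
`σs`; each color change of `v` from `a` to `b`, while all neighbors of `v` are
colored `h`, contributes the two edges `(a h)(h b)`. -/
inductive VWalk (G : Dgraph V) (v : V) : List (V → X) → List X → Prop
  | single (σ : V → X) : VWalk G v [σ] [σ v]
  | stay {σ σ' : V → X} {rest : List (V → X)} {l : List X} :
      σ v = σ' v → VWalk G v (σ' :: rest) l → VWalk G v (σ :: σ' :: rest) l
  | move {σ σ' : V → X} {rest : List (V → X)} {l : List X} (h : X) :
      σ v ≠ σ' v → (∀ w, G.UAdj v w → σ w = h) →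
      VWalk G v (σ' :: rest) l → VWalk G v (σ :: σ' :: rest) (σ v :: h :: l)

/-- `H`-realizability of a walk `Q` via recoloring sequences satisfying the
monochromatic neighborhood property: `Q = S(q)` in `π(H)`. -/
def MRealizable (G : Dgraph V) (H : Dgraph X) (α β : V → X) (q : V) (Q : List X) : Prop :=
  ∃ (σs : List (V → X)) (Sq : List X),
    IsRecolSeq G H σs ∧ σs.head? = some α ∧ σs.getLast? = some β ∧
    MonoNbhd G σs ∧ VWalk G q σs Sq ∧ PiEq Sq Q

/-- Orientation compatibility of a walk `Q`: every generated vertex walk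
satisfies the zigzag condition. -/
def OrientCompatible (G : Dgraph V) (H : Dgraph X) (α β : V → X) (q : V) (Q : List X) : Prop :=
  ∀ (v : V) (Wl : List V), IsWalk G q v Wl →
    ∀ S : List X, IsReduced S → PiEq (conj α β Wl Q) S → Zigzag G H v S

/-- Hom₁-adjacency: the homomorphisms differ on exactly one vertex and, for
every arc `x → y` of `G`, both `φ x → ψ y` and `ψ x → φ y` are arcs of `H`. -/
def Hom1Adj (G : Dgraph V) (H : Dgraph X) (φ ψ : V → X) : Prop :=
  (∃! u, φ u ≠ ψ u) ∧ ∀ ⦃x y⦄, G.Adj x y → H.Adj (φ x) (ψ y) ∧ H.Adj (ψ x) (φ y)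

/-- A recoloring sequence in the Hom₁ sense (digraphs). -/
def Hom1Seq (G : Dgraph V) (H : Dgraph X) (σs : List (V → X)) : Prop :=
  σs ≠ [] ∧ (∀ σ ∈ σs, IsHom G H σ) ∧ σs.Chain' (Hom1Adj G H)

/-- A recoloring sequence in which each step recolors exactly one vertex to an
adjacent color (the Hom₁ sense for reflexive undirected graphs). -/
def AdjRecolSeq (G : Dgraph V) (H : Dgraph X) (σs : List (V → X)) : Prop :=
  σs ≠ [] ∧ (∀ σ ∈ σs, IsHom G H σ) ∧
  σs.Chain' fun σ σ' => (∃! u, σ u ≠ σ' u) ∧ ∀ u, σ u ≠ σ' u → H.Adj (σ u) (σ' u)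

/-- The push-or-pull property: whenever a vertex changes its color from `a` to
`b`, every neighbor of that vertex has color `a` or `b`. -/
def PushOrPull (G : Dgraph V) (σs : List (V → X)) : Prop :=
  σs.Chain' fun σ σ' => ∀ u, σ u ≠ σ' u → ∀ w, G.UAdj u w → σ w = σ u ∨ σ w = σ' u

/-- The walk of successive colors of `v` along a recoloring sequence. -/
def colorWalk (σs : List (V → X)) (v : V) : List X := σs.map fun σ => σ v

/-- `H`-realizability via recoloring sequences (reflexive undirected Hom₁
sense) satisfying the push-or-pull property. -/
def PRealizable (G : Dgraph V) (H : Dgraph X) (α β : V → X) (q : V) (Q : List X) : Prop :=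
  ∃ σs : List (V → X), AdjRecolSeq G H σs ∧ σs.head? = some α ∧ σs.getLast? = some β ∧
    PushOrPull G σs ∧ PiEq (colorWalk σs q) Q

/-- `H`-realizability via Hom₁ recoloring sequences of digraphs satisfying the
push-or-pull property. -/
def DRealizable (G : Dgraph V) (H : Dgraph X) (α β : V → X) (q : V) (Q : List X) : Prop :=
  ∃ σs : List (V → X), Hom1Seq G H σs ∧ σs.head? = some α ∧ σs.getLast? = some β ∧
    PushOrPull G σs ∧ PiEq (colorWalk σs q) Q

/-- `H` contains no 4-cycle of algebraic girth 0 as a subgraph (neither of the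
two orientations of the 4-cycle with two forward and two backward arcs). -/
def NoZeroGirthC4 (H : Dgraph X) : Prop :=
  ∀ a b c d : X, a ≠ b → a ≠ c → a ≠ d → b ≠ c → b ≠ d → c ≠ d →
    ¬(H.Adj a b ∧ H.Adj b d ∧ H.Adj a c ∧ H.Adj c d) ∧
    ¬(H.Adj a b ∧ H.Adj d b ∧ H.Adj a c ∧ H.Adj d c)

/-- `H` contains no triangle of algebraic girth 1 as a subgraph. -/
def NoOneGirthTriangle (H : Dgraph X) : Prop :=
  ∀ x y z : X, x ≠ y → y ≠ z → x ≠ z → ¬(H.Adj x y ∧ H.Adj y z ∧ H.Adj x z)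

/-- A path in the reconfiguration graph `R_H(G)` from `α` to `β`. -/
def IsRPath (G : Dgraph V) (H : Dgraph X) (α β : V → X) (L : List (V → X)) : Prop :=
  L ≠ [] ∧ L.head? = some α ∧ L.getLast? = some β ∧
  (∀ σ ∈ L, IsHom G H σ) ∧ L.Chain' fun φ ψ => ∃! u, φ u ≠ ψ u

/-- A path in the graph `Hom₁(G, H)` from `α` to `β`. -/
def IsHom1Path (G : Dgraph V) (H : Dgraph X) (α β : V → X) (L : List (V → X)) : Prop :=
  L ≠ [] ∧ L.head? = some α ∧ L.getLast? = some β ∧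
  (∀ σ ∈ L, IsHom G H σ) ∧ L.Chain' (Hom1Adj G H)

/-- The set of reduced walks `Q` from `α q` to `β q` that generate symmetric
vertex walks on `V'` with the system of walks `Wf`. -/
def SymGenSet (H : Dgraph X) (α β : V → X) (q : V)
    (V' : Set V) (Wf : V → List V) : Set (List X) :=
  {Q | IsWalk H (α q) (β q) Q ∧ IsReduced Q ∧
    ∀ v ∈ V', ∀ S : List X, IsReduced S → PiEq (conj α β (Wf v) Q) S → IsSymWalk H S}

/-- The set of orientation-compatible walks for `q` and the system `Uf`. -/
def OCSet (G : Dgraph V) (H : Dgraph X) (α β : V → X) (q : V)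
    (Uf : V → List V) : Set (List X) :=
  {Q | IsWalk H (α q) (β q) Q ∧ IsReduced Q ∧ Even (wlen Q) ∧
    ∀ (v : V) (S : List X), IsReduced S → PiEq (conj α β (Uf v) Q) S → Zigzag G H v S}

/-- The set `Π_q` of walks from `α q` to `β q` that are `H`-realizable via
recoloring sequences satisfying the monochromatic neighborhood property. -/
def MRealSet (G : Dgraph V) (H : Dgraph X) (α β : V → X) (q : V) : Set (List X) :=
  {Q | IsWalk H (α q) (β q) Q ∧ IsReduced Q ∧ MRealizable G H α β q Q}

/-- The set of walks from `α q` to `β q` that are `H`-realizable via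
recoloring sequences satisfying the push-or-pull property. -/
def PRealSet (G : Dgraph V) (H : Dgraph X) (α β : V → X) (q : V) : Set (List X) :=
  {Q | IsWalk H (α q) (β q) Q ∧ IsReduced Q ∧ PRealizable G H α β q Q}

/-- Ceiling division on natural numbers. -/
def cdiv (a b : ℕ) : ℕ := (a + b - 1) / b

end HRecoloring

open HRecoloring

section AuxProof
open HRecoloring Relation List

variable {X : Type}

/-! ### Reduction step infrastructure -/

/-- Uniform middle pattern for a reduction step. -/
def RMid (m : List X) (x : X) : Prop := (∃ y, m = [x, y, x]) ∨ m = [x, x]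

lemma rstep_iff {l l' : List X} : RStep l l' ↔
    ∃ p s m x, RMid m x ∧ l = p ++ m ++ s ∧ l' = p ++ [x] ++ s := by
  constructor
  · rintro (⟨p, s, x, y, rfl, rfl⟩ | ⟨p, s, x, rfl, rfl⟩)
    · exact ⟨p, s, _, x, Or.inl ⟨y, rfl⟩, rfl, rfl⟩
    · exact ⟨p, s, _, x, Or.inr rfl, rfl, rfl⟩
  · rintro ⟨p, s, m, x, (⟨y, rfl⟩ | rfl), rfl, rfl⟩
    · exact Or.inl ⟨p, s, x, y, rfl, rfl⟩
    · exact Or.inr ⟨p, s, x, rfl, rfl⟩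

lemma diamond_le {p₁ s₁ p₂ s₂ m₁ m₂ : List X} {x₁ x₂ : X}
    (h₁ : RMid m₁ x₁) (h₂ : RMid m₂ x₂)
    (heq : p₁ ++ m₁ ++ s₁ = p₂ ++ m₂ ++ s₂) (hle : p₁.length ≤ p₂.length) :
    ∃ d, ReflGen RStep (p₁ ++ [x₁] ++ s₁) d ∧ ReflGen RStep (p₂ ++ [x₂] ++ s₂) d := by
  have hpre1 : p₁ <+: p₂ ++ m₂ ++ s₂ := ⟨m₁ ++ s₁, by simpa [List.append_assoc] using heq⟩
  have hpre2 : p₂ <+: p₂ ++ m₂ ++ s₂ := ⟨m₂ ++ s₂, by simp [List.append_assoc]⟩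
  obtain ⟨t, rfl⟩ := List.prefix_of_prefix_length_le hpre1 hpre2 hle
  have heq' : m₁ ++ s₁ = t ++ (m₂ ++ s₂) := by
    apply List.append_cancel_left (as := p₁)
    simpa [List.append_assoc] using heq
  clear heq hpre1 hpre2 hle
  by_cases hlen : m₁.length ≤ t.length
  · -- disjoint occurrences
    have hpre3 : m₁ <+: t :=
      List.prefix_of_prefix_length_le ⟨s₁, heq'⟩ ⟨m₂ ++ s₂, rfl⟩ hlen
    obtain ⟨u, rfl⟩ := hpre3
    have hs₁ : s₁ = u ++ (m₂ ++ s₂) := by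
      apply List.append_cancel_left (as := m₁)
      simpa [List.append_assoc] using heq'
    subst hs₁
    refine ⟨p₁ ++ [x₁] ++ (u ++ ([x₂] ++ s₂)), ReflGen.single ?_, ReflGen.single ?_⟩
    · exact rstep_iff.mpr ⟨p₁ ++ [x₁] ++ u, s₂, m₂, x₂, h₂,
        by simp [List.append_assoc], by simp [List.append_assoc]⟩
    · exact rstep_iff.mpr ⟨p₁, u ++ ([x₂] ++ s₂), m₁, x₁, h₁,
        by simp [List.append_assoc], by simp [List.append_assoc]⟩
  · -- overlapping occurrences
    have reflGen_of_eq : ∀ a b : List X, a = b → ReflGen RStep a b := by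
      rintro a b rfl; exact ReflGen.refl
    rcases h₁ with ⟨y, rfl⟩ | rfl
    · -- m₁ = [x₁, y, x₁]
      rcases t with _ | ⟨a, _ | ⟨b, _ | ⟨c, tt⟩⟩⟩
      · rcases h₂ with ⟨y', rfl⟩ | rfl
        · obtain ⟨e1, e2, e3, e4⟩ :
              x₁ = x₂ ∧ y = y' ∧ x₁ = x₂ ∧ s₁ = s₂ := by
            have h := heq'
            simp only [List.nil_append, List.cons_append, List.cons.injEq] at h
            tauto
          exact ⟨p₁ ++ [x₁] ++ s₁, ReflGen.refl,
            reflGen_of_eq _ _ (by simp [← e1, e4])⟩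
        · obtain ⟨e1, e2, e3⟩ :
              x₁ = x₂ ∧ y = x₂ ∧ x₁ :: s₁ = s₂ := by
            have h := heq'
            simp only [List.nil_append, List.cons_append, List.cons.injEq] at h
            tauto
          refine ⟨p₁ ++ [x₁] ++ s₁, ReflGen.refl, ReflGen.single ?_⟩
          exact rstep_iff.mpr ⟨p₁, s₁, [x₁, x₁], x₁, Or.inr rfl,
            by simp [← e1, ← e3], by simp⟩
      · rcases h₂ with ⟨y', rfl⟩ | rfl
        · obtain ⟨e1, e2, e3, e4⟩ :
              x₁ = a ∧ y = x₂ ∧ x₁ = y' ∧ s₁ = x₂ :: s₂ := by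
            have h := heq'
            simp only [List.nil_append, List.cons_append, List.cons.injEq] at h
            tauto
          exact ⟨p₁ ++ [x₁] ++ s₁, ReflGen.refl,
            reflGen_of_eq _ _ (by simp [← e1, e4])⟩
        · obtain ⟨e1, e2, e3, e4⟩ :
              x₁ = a ∧ y = x₂ ∧ x₁ = x₂ ∧ s₁ = s₂ := by
            have h := heq'
            simp only [List.nil_append, List.cons_append, List.cons.injEq] at h
            tauto
          refine ⟨p₁ ++ [x₁] ++ s₁, ReflGen.refl, ReflGen.single ?_⟩
          exact rstep_iff.mpr ⟨p₁, s₁, [x₁, x₁], x₁, Or.inr rfl,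
            by simp [← e1, ← e3, e4], by simp⟩
      · rcases h₂ with ⟨y', rfl⟩ | rfl
        · obtain ⟨e1, e2, e3, e4⟩ :
              x₁ = a ∧ y = b ∧ x₁ = x₂ ∧ s₁ = y' :: x₂ :: s₂ := by
            have h := heq'
            simp only [List.nil_append, List.cons_append, List.cons.injEq] at h
            tauto
          refine ⟨p₁ ++ [x₁] ++ s₂, ReflGen.single ?_, ReflGen.single ?_⟩
          · exact rstep_iff.mpr ⟨p₁, s₂, [x₁, y', x₁], x₁, Or.inl ⟨y', rfl⟩,
              by simp [e4, ← e3], by simp⟩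
          · exact rstep_iff.mpr ⟨p₁, s₂, [x₁, y, x₁], x₁, Or.inl ⟨y, rfl⟩,
              by simp [← e1, ← e2, ← e3], by simp⟩
        · obtain ⟨e1, e2, e3, e4⟩ :
              x₁ = a ∧ y = b ∧ x₁ = x₂ ∧ s₁ = x₂ :: s₂ := by
            have h := heq'
            simp only [List.nil_append, List.cons_append, List.cons.injEq] at h
            tauto
          refine ⟨p₁ ++ [x₁] ++ s₂, ReflGen.single ?_, ReflGen.single ?_⟩
          · exact rstep_iff.mpr ⟨p₁, s₂, [x₁, x₁], x₁, Or.inr rfl,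
              by simp [e4, ← e3], by simp⟩
          · exact rstep_iff.mpr ⟨p₁, s₂, [x₁, y, x₁], x₁, Or.inl ⟨y, rfl⟩,
              by simp [← e1, ← e2, ← e3], by simp⟩
      · exfalso; apply hlen; simp only [List.length_cons, List.length_nil]; omega
    · -- m₁ = [x₁, x₁]
      rcases t with _ | ⟨a, _ | ⟨b, tt⟩⟩
      · rcases h₂ with ⟨y', rfl⟩ | rfl
        · obtain ⟨e1, e2, e3⟩ :
              x₁ = x₂ ∧ x₁ = y' ∧ s₁ = x₂ :: s₂ := by
            have h := heq'
            simp only [List.nil_append, List.cons_append, List.cons.injEq] at h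
            tauto
          refine ⟨p₁ ++ [x₁] ++ s₂, ReflGen.single ?_,
            reflGen_of_eq _ _ (by simp [← e1])⟩
          exact rstep_iff.mpr ⟨p₁, s₂, [x₁, x₁], x₁, Or.inr rfl,
            by simp [e3, ← e1], by simp⟩
        · obtain ⟨e1, e2⟩ : x₁ = x₂ ∧ s₁ = s₂ := by
            have h := heq'
            simp only [List.nil_append, List.cons_append, List.cons.injEq] at h
            tauto
          exact ⟨p₁ ++ [x₁] ++ s₁, ReflGen.refl,
            reflGen_of_eq _ _ (by simp [← e1, e2])⟩
      · rcases h₂ with ⟨y', rfl⟩ | rfl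
        · obtain ⟨e1, e2, e3⟩ :
              x₁ = a ∧ x₁ = x₂ ∧ s₁ = y' :: x₂ :: s₂ := by
            have h := heq'
            simp only [List.nil_append, List.cons_append, List.cons.injEq] at h
            tauto
          refine ⟨p₁ ++ [x₁] ++ s₂, ReflGen.single ?_, ReflGen.single ?_⟩
          · exact rstep_iff.mpr ⟨p₁, s₂, [x₁, y', x₁], x₁, Or.inl ⟨y', rfl⟩,
              by simp [e3, ← e2], by simp⟩
          · exact rstep_iff.mpr ⟨p₁, s₂, [x₁, x₁], x₁, Or.inr rfl,
              by simp [← e1, ← e2], by simp⟩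
        · obtain ⟨e1, e2, e3⟩ :
              x₁ = a ∧ x₁ = x₂ ∧ s₁ = x₂ :: s₂ := by
            have h := heq'
            simp only [List.nil_append, List.cons_append, List.cons.injEq] at h
            tauto
          exact ⟨p₁ ++ [x₁] ++ s₁, ReflGen.refl,
            reflGen_of_eq _ _ (by simp [← e1, ← e2, e3])⟩
      · exfalso; apply hlen; simp only [List.length_cons, List.length_nil]; omega

lemma rstep_diamond : ∀ a b c : List X, RStep a b → RStep a c →
    ∃ d, ReflGen RStep b d ∧ ReflTransGen RStep c d := by
  intro a b c hb hc
  rw [rstep_iff] at hb hc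
  obtain ⟨p₁, s₁, m₁, x₁, h₁, rfl, rfl⟩ := hb
  obtain ⟨p₂, s₂, m₂, x₂, h₂, heq, rfl⟩ := hc
  rcases le_total p₁.length p₂.length with hle | hle
  · obtain ⟨d, hd1, hd2⟩ := diamond_le h₁ h₂ heq hle
    exact ⟨d, hd1, hd2.to_reflTransGen⟩
  · obtain ⟨d, hd1, hd2⟩ := diamond_le h₂ h₁ heq.symm hle
    exact ⟨d, hd2, hd1.to_reflTransGen⟩

lemma piEq_to_red {W Q : List X} (hpi : PiEq W Q) (hQ : IsReduced Q) :
    ReflTransGen RStep W Q := by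
  have E := Relation.equivalence_join_reflTransGen (r := @RStep X) rstep_diamond
  have hJ : Join (ReflTransGen RStep) W Q := by
    clear hQ
    induction hpi with
    | rel a b hab => exact ⟨b, ReflTransGen.single hab, ReflTransGen.refl⟩
    | refl a => exact E.refl a
    | symm a b _ ih => exact E.symm ih
    | trans a b c _ _ ih1 ih2 => exact E.trans ih1 ih2
  obtain ⟨d, hWd, hQd⟩ := hJ
  rcases hQd.cases_head with rfl | ⟨c, hc, _⟩
  · exact hWd
  · exact absurd hc (hQ c)

/-! ### Alternating (zigzag) walks -/

/-- Direction condition of the `i`-th edge for the zigzag pattern of type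
`d` (`true` = IN, `false` = OUT). -/
def ealt (H : Dgraph X) (d : Bool) (i : ℕ) (x y : X) : Prop :=
  if (i % 2 = 0) ↔ (d = true) then H.Adj y x else H.Adj x y

/-- The zigzag pattern of type `d`. -/
def Alt (H : Dgraph X) (d : Bool) (l : List X) : Prop :=
  ∀ i (hi : i + 1 < l.length), ealt H d i (l[i]'(by omega)) (l[i+1]'hi)

variable {H : Dgraph X}

lemma ealt_congr {d : Bool} {i j : ℕ} {x y : X} (hp : i % 2 = j % 2) :
    ealt H d i x y ↔ ealt H d j x y := by
  unfold ealt
  by_cases hi0 : i % 2 = 0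
  · have hj0 : j % 2 = 0 := by omega
    simp [hi0, hj0]
  · have hj0 : ¬ j % 2 = 0 := by omega
    simp [hi0, hj0]

lemma ealt_swap {d : Bool} {i j : ℕ} {x y : X} (hp : i % 2 ≠ j % 2) :
    ealt H d i x y ↔ ealt H d j y x := by
  have h2 : (i % 2 = 0) ↔ ¬ (j % 2 = 0) := by omega
  by_cases hj : j % 2 = 0 <;> by_cases hd : d = true <;>
    simp [ealt, hj, hd, h2]

lemma alt_iff_IN {l : List X} : INCompatible H l ↔ Alt H true l := by
  unfold INCompatible Alt ealt
  constructor <;> intro hh i hi <;> have := hh i hi <;>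
    by_cases h2 : i % 2 = 0 <;> simp_all [List.get_eq_getElem]

lemma alt_iff_OUT {l : List X} : OUTCompatible H l ↔ Alt H false l := by
  unfold OUTCompatible Alt ealt
  constructor <;> intro hh i hi <;> have := hh i hi <;>
    by_cases h2 : i % 2 = 0 <;> simp_all [List.get_eq_getElem]

lemma alt_wcomp {d : Bool} {l₁ l₂ : List X} (h₁ : Alt H d l₁) (h₂ : Alt H d l₂)
    (he : Even (wlen l₁)) (hn₁ : l₁ ≠ []) (hn₂ : l₂ ≠ [])
    (hlink : l₁.getLast? = l₂.head?) : Alt H d (wcomp l₁ l₂) := by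
  have hl₁ : 1 ≤ l₁.length := List.length_pos_iff.mpr hn₁
  have hl₂ : 1 ≤ l₂.length := List.length_pos_iff.mpr hn₂
  have hlink' : l₁[l₁.length - 1]'(by omega) = l₂[0]'(by omega) := by
    have hx := hlink
    rw [List.getLast?_eq_getElem?, List.head?_eq_getElem?,
      List.getElem?_eq_getElem (by omega), List.getElem?_eq_getElem (by omega)] at hx
    exact Option.some.inj hx
  obtain ⟨k, hk⟩ := he
  have hwl : wlen l₁ = l₁.length - 1 := rfl
  have hk' : l₁.length - 1 = k + k := by omega
  show Alt H d (l₁ ++ l₂.tail)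
  have hlen : (l₁ ++ l₂.tail).length = l₁.length + l₂.length - 1 := by
    rw [List.length_append, List.length_tail]; omega
  have hget : ∀ j (hj1 : j < (l₁ ++ l₂.tail).length) (hj2 : l₁.length - 1 ≤ j),
      (l₁ ++ l₂.tail)[j] = l₂[j - (l₁.length - 1)]'(by rw [hlen] at hj1; omega) := by
    intro j hj1 hj2
    by_cases hjl : j < l₁.length
    · have hje : j = l₁.length - 1 := by omega
      subst hje
      rw [List.getElem_append_left hjl]
      convert hlink' using 2
      omega
    · rw [List.getElem_append_right (by omega)]
      rw [List.getElem_tail]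
      have hidx : j - l₁.length + 1 = j - (l₁.length - 1) := by omega
      simp only [hidx]
  intro i hi
  have hi' : i + 1 < (l₁ ++ l₂.tail).length := hi
  by_cases hc : i + 1 < l₁.length
  · rw [List.getElem_append_left hc, List.getElem_append_left (by omega : i < l₁.length)]
    exact h₁ i hc
  · have him : i - (l₁.length - 1) + 1 < l₂.length := by rw [hlen] at hi'; omega
    have hval := h₂ (i - (l₁.length - 1)) him
    have hpar : i % 2 = (i - (l₁.length - 1)) % 2 := by omega
    have e1 := hget i (by omega) (by omega)
    have e2 := hget (i + 1) (by omega) (by omega)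
    have hidx2 : (i + 1) - (l₁.length - 1) = i - (l₁.length - 1) + 1 := by omega
    simp only [hidx2] at e2
    rw [e1, e2]
    exact (ealt_congr hpar).mpr hval

lemma alt_reverse {d : Bool} {l : List X} (h : Alt H d l) (he : Even (wlen l)) :
    Alt H d l.reverse := by
  intro i hi
  rw [List.length_reverse] at hi
  obtain ⟨k, hk⟩ := he
  have hwl : wlen l = l.length - 1 := rfl
  have h1 : 1 ≤ l.length := by omega
  rw [List.getElem_reverse, List.getElem_reverse]
  have hj : l.length - 1 - (i+1) + 1 < l.length := by omega
  have := h (l.length - 1 - (i+1)) hj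
  have hswap : (l.length - 1 - (i+1)) % 2 ≠ i % 2 := by omega
  rw [ealt_swap hswap] at this
  convert this using 2
  omega

lemma getElem_idx_congr {α : Type*} {l : List α} {i j : ℕ} (hij : i = j) {hi : i < l.length} :
    l[i]'hi = l[j]'(hij ▸ hi) := by subst hij; rfl

lemma getA {p m s : List X} {j : ℕ} (hj : j < p.length) {hh : j < (p ++ m ++ s).length} :
    (p ++ m ++ s)[j] = p[j] := by
  rw [List.getElem_append_left
      (by simp only [List.length_append]; omega : j < (p ++ m).length),
    List.getElem_append_left hj]

lemma getB {p m s : List X} {j : ℕ} (hj1 : p.length ≤ j) (hj2 : j < p.length + m.length)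
    {hh : j < (p ++ m ++ s).length} :
    (p ++ m ++ s)[j] = m[j - p.length]'(by omega) := by
  rw [List.getElem_append_left
      (by simp only [List.length_append]; omega : j < (p ++ m).length),
    List.getElem_append_right hj1]

lemma getC {p m s : List X} {j : ℕ} (hj1 : p.length + m.length ≤ j)
    {hh : j < (p ++ m ++ s).length} :
    (p ++ m ++ s)[j] = s[j - p.length - m.length]'(by
      simp only [List.length_append] at hh; omega) := by
  rw [List.getElem_append_right
      (by simp only [List.length_append]; omega : (p ++ m).length ≤ j)]
  exact getElem_idx_congr (by simp only [List.length_append]; omega)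

lemma alt_delete {d : Bool} {p s : List X} {x y : X}
    (h : Alt H d (p ++ [x, y, x] ++ s)) : Alt H d (p ++ [x] ++ s) := by
  have len1 : (p ++ [x] ++ s).length = p.length + 1 + s.length := by
    simp only [List.length_append, List.length_cons, List.length_nil]
  have len2 : (p ++ [x, y, x] ++ s).length = p.length + 3 + s.length := by
    simp only [List.length_append, List.length_cons, List.length_nil]
  have hmapA : ∀ j (hj : j ≤ p.length),
      (p ++ [x] ++ s)[j]'(by rw [len1]; omega) =
      (p ++ [x, y, x] ++ s)[j]'(by rw [len2]; omega) := by
    intro j hj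
    by_cases hjp : j < p.length
    · rw [getA hjp, getA hjp]
    · have hje : j = p.length := by omega
      subst hje
      rw [getB (le_refl _) (by simp only [List.length_cons, List.length_nil]; omega),
        getB (le_refl _) (by simp only [List.length_cons, List.length_nil]; omega)]
      simp only [Nat.sub_self]
      rfl
  have hmapC : ∀ j (hj1 : p.length < j) (hj : j < (p ++ [x] ++ s).length),
      (p ++ [x] ++ s)[j]'hj =
      (p ++ [x, y, x] ++ s)[j + 2]'(by rw [len2]; rw [len1] at hj; omega) := by
    intro j hj1 hj
    rw [getC (by simp only [List.length_cons, List.length_nil]; omega),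
      getC (by simp only [List.length_cons, List.length_nil]; omega)]
    exact getElem_idx_congr (by simp only [List.length_cons, List.length_nil]; omega)
  intro i hi
  have hi1 : i < (p ++ [x] ++ s).length := by omega
  by_cases hc : i + 1 ≤ p.length
  · rw [hmapA i (by omega), hmapA (i + 1) hc]
    exact h i (by rw [len2]; rw [len1] at hi; omega)
  · by_cases hc2 : i ≤ p.length
    · rw [hmapA i hc2, hmapC (i + 1) (by omega) hi]
      have hie : i = p.length := by omega
      have horig : i + 2 + 1 < (p ++ [x, y, x] ++ s).length := by
        rw [len2]; rw [len1] at hi; omega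
      have hval := h (i + 2) horig
      have hix : (p ++ [x, y, x] ++ s)[i]'(by rw [len2]; omega) =
          (p ++ [x, y, x] ++ s)[i + 2]'(by omega) := by
        subst hie
        rw [getB (le_refl _) (by simp only [List.length_cons, List.length_nil]; omega),
          getB (by omega) (by simp only [List.length_cons, List.length_nil]; omega)]
        simp only [Nat.sub_self, Nat.add_sub_cancel_left]
        rfl
      rw [hix]
      exact (ealt_congr (by omega)).mpr hval
    · rw [hmapC i (by omega) hi1, hmapC (i + 1) (by omega) hi]
      have horig : i + 2 + 1 < (p ++ [x, y, x] ++ s).length := by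
        rw [len2]; rw [len1] at hi; omega
      exact (ealt_congr (by omega : i % 2 = (i + 2) % 2)).mpr (h (i + 2) horig)


/-! ### Reduced walks have no repeated consecutive vertices -/

lemma isReduced_cons {a : X} {l : List X} (h : IsReduced (a :: l)) : IsReduced l := by
  intro l' hl'
  rcases hl' with ⟨p, s, u, v, hl, hl2⟩ | ⟨p, s, u, hl, hl2⟩
  · exact h (a :: l') (Or.inl ⟨a :: p, s, u, v, by simp [hl], by simp [hl2]⟩)
  · exact h (a :: l') (Or.inr ⟨a :: p, s, u, by simp [hl], by simp [hl2]⟩)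

lemma chain_ne_of_reduced : ∀ {l : List X}, IsReduced l → l.Chain' (· ≠ ·) := by
  intro l
  induction l with
  | nil => intro _; simp [List.Chain']
  | cons a t ih =>
    intro h
    cases t with
    | nil => simp [List.Chain']
    | cons b t2 =>
      rw [List.Chain', List.isChain_cons_cons]
      refine ⟨?_, ih (isReduced_cons h)⟩
      intro hab
      subst hab
      exact h (a :: t2) (Or.inr ⟨[], t2, a, by simp, by simp⟩)

lemma rstep_ne {l l' : List X} (hc : l.Chain' (· ≠ ·)) (hs : RStep l l') :
    ∃ p s x y, l = p ++ [x, y, x] ++ s ∧ l' = p ++ [x] ++ s := by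
  rcases hs with h | ⟨p, s, u, hl, _⟩
  · exact h
  · exfalso
    subst hl
    rcases List.isChain_append.mp hc with ⟨h1, -, -⟩
    rcases List.isChain_append.mp h1 with ⟨-, h2, -⟩
    rw [List.isChain_cons_cons] at h2
    exact h2.1 rfl

lemma ne_delete {p s : List X} {x y : X} (hc : (p ++ [x, y, x] ++ s).Chain' (· ≠ ·)) :
    (p ++ [x] ++ s).Chain' (· ≠ ·) := by
  rcases List.isChain_append.mp hc with ⟨h1, h2, h3⟩
  rcases List.isChain_append.mp h1 with ⟨h4, h5, h6⟩
  apply List.isChain_append.mpr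
  refine ⟨List.isChain_append.mpr ⟨h4, by simp, ?_⟩, h2, ?_⟩
  · intro a ha c hcm
    simp only [List.head?_cons, Option.mem_some_iff] at hcm
    subst hcm
    exact h6 a ha x (by simp)
  · intro a ha c hcm
    have hax : x = a := by
      rw [List.getLast?_append_of_ne_nil _ (by simp : ([x] : List X) ≠ [])] at ha
      simpa using ha
    apply h3 a ?_ c hcm
    rw [List.getLast?_append_of_ne_nil _ (by simp : ([x, y, x] : List X) ≠ [])]
    simp [hax]

lemma rtg_preserve {d : Bool} {l l' : List X} (h : ReflTransGen RStep l l') :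
    l.Chain' (· ≠ ·) → Alt H d l → l'.Chain' (· ≠ ·) ∧ Alt H d l' := by
  induction h with
  | refl => exact fun hc ha => ⟨hc, ha⟩
  | tail _ hstep ih =>
    intro hc ha
    obtain ⟨hc1, ha1⟩ := ih hc ha
    obtain ⟨p, s, u, v, rfl, rfl⟩ := rstep_ne hc1 hstep
    exact ⟨ne_delete hc1, alt_delete ha1⟩

/-! ### Concatenation facts -/

lemma wcomp_ne {l₁ l₂ : List X} (h : l₁ ≠ []) : wcomp l₁ l₂ ≠ [] := by
  unfold wcomp
  simp [h]

lemma wcomp_head? {l₁ l₂ : List X} (h : l₁ ≠ []) : (wcomp l₁ l₂).head? = l₁.head? := by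
  unfold wcomp
  rcases l₁ with _ | ⟨a, t⟩
  · exact absurd rfl h
  · simp

lemma wcomp_getLast? {l₁ l₂ : List X} (h2 : l₂ ≠ []) (hl : l₁.getLast? = l₂.head?) :
    (wcomp l₁ l₂).getLast? = l₂.getLast? := by
  rcases l₂ with _ | ⟨b, t⟩
  · exact absurd rfl h2
  · unfold wcomp
    rcases t with _ | ⟨c, u⟩
    · simp only [List.tail_cons, List.append_nil, List.getLast?_singleton]
      simpa using hl
    · rw [List.tail_cons, List.getLast?_append_of_ne_nil _ (by simp : (c :: u : List X) ≠ [])]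
      rfl

lemma wlen_wcomp {l₁ l₂ : List X} (h1 : l₁ ≠ []) (h2 : l₂ ≠ []) :
    wlen (wcomp l₁ l₂) = wlen l₁ + wlen l₂ := by
  have e1 : 1 ≤ l₁.length := List.length_pos_iff.mpr h1
  have e2 : 1 ≤ l₂.length := List.length_pos_iff.mpr h2
  unfold wcomp wlen
  rw [List.length_append, List.length_tail]
  omega

lemma chain'_wcomp {r : X → X → Prop} {l₁ l₂ : List X} (h₁ : l₁.Chain' r) (h₂ : l₂.Chain' r)
    (hl : l₁.getLast? = l₂.head?) : (wcomp l₁ l₂).Chain' r := by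
  rcases l₂ with _ | ⟨b, t⟩
  · unfold wcomp
    simpa using h₁
  · unfold wcomp
    rw [List.tail_cons]
    apply List.isChain_append.mpr
    refine ⟨h₁, (List.isChain_cons.mp h₂).2, ?_⟩
    intro a ha c hcm
    have hab : b = a := by
      rw [hl] at ha
      simpa using ha
    subst hab
    exact (List.isChain_cons.mp h₂).1 c hcm

/-! ### Iterated walks -/

lemma witer_facts {d : Bool} {R' : List X} {hh : X} (hne : R' ≠ []) (hhd : R'.head? = some hh)
    (hlast : R'.getLast? = some hh) (he : Even (wlen R')) (hc : R'.Chain' (· ≠ ·))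
    (ha : Alt H d R') : ∀ n : ℕ, (witer R' hh n) ≠ [] ∧ (witer R' hh n).head? = some hh ∧
      (witer R' hh n).getLast? = some hh ∧ Even (wlen (witer R' hh n)) ∧
      (witer R' hh n).Chain' (· ≠ ·) ∧ Alt H d (witer R' hh n) := by
  intro n
  induction n with
  | zero =>
    refine ⟨by simp [witer], by simp [witer], by simp [witer], ?_, by simp [witer, List.Chain'], ?_⟩
    · simp [witer, wlen]
    · intro i hi
      simp [witer] at hi
  | succ n ih =>
    obtain ⟨ih1, ih2, ih3, ih4, ih5, ih6⟩ := ih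
    have hlink : R'.getLast? = (witer R' hh n).head? := by rw [hlast, ih2]
    have hdef : witer R' hh (n + 1) = wcomp R' (witer R' hh n) := rfl
    refine ⟨by rw [hdef]; exact wcomp_ne hne,
      by rw [hdef, wcomp_head? hne]; exact hhd,
      by rw [hdef, wcomp_getLast? ih1 hlink]; exact ih3, ?_,
      by rw [hdef]; exact chain'_wcomp hc ih5 hlink,
      by rw [hdef]; exact alt_wcomp ha ih6 he hne ih1 hlink⟩
    rw [hdef, wlen_wcomp hne ih1]
    exact he.add ih4

lemma zpow_facts {d : Bool} {R : List X} {hh : X} (hne : R ≠ []) (hhd : R.head? = some hh)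
    (hlast : R.getLast? = some hh) (he : Even (wlen R)) (hc : R.Chain' (· ≠ ·))
    (ha : Alt H d R) (n : ℤ) :
    (zpowWalk R hh n) ≠ [] ∧ (zpowWalk R hh n).head? = some hh ∧
      (zpowWalk R hh n).getLast? = some hh ∧ Even (wlen (zpowWalk R hh n)) ∧
      (zpowWalk R hh n).Chain' (· ≠ ·) ∧ Alt H d (zpowWalk R hh n) := by
  unfold zpowWalk
  split
  · exact witer_facts hne hhd hlast he hc ha _
  · apply witer_facts
    · simpa using hne
    · rw [List.head?_reverse]; exact hlast
    · rw [List.getLast?_reverse]; exact hhd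
    · unfold wlen; rw [List.length_reverse]; exact he
    · rw [List.Chain', List.isChain_reverse]
      exact List.IsChain.imp (fun a bb hab => (Ne.symm hab : _)) hc
    · exact alt_reverse ha he

/-! ### Main lemma -/

lemma main_alt {d : Bool} {hh bb : X} {R P : List X}
    (hR : IsWalk H hh hh R) (hRred : IsReduced R) (hReven : Even (wlen R))
    (hP : IsWalk H hh bb P) (hPred : IsReduced P)
    (haR : Alt H d R) (haP : Alt H d P) :
    ∀ (n : ℤ) (Q : List X), IsReduced Q →
      PiEq (wcomp (zpowWalk R hh n) P) Q → Alt H d Q := by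
  obtain ⟨hne, hhd, hlast, -⟩ := hR
  obtain ⟨hneP, hhdP, -, -⟩ := hP
  have hcR := chain_ne_of_reduced hRred
  have hcP := chain_ne_of_reduced hPred
  intro n Q hQred hpi
  obtain ⟨z1, z2, z3, z4, z5, z6⟩ := zpow_facts hne hhd hlast hReven hcR haR n
  have hlink : (zpowWalk R hh n).getLast? = P.head? := by rw [z3, hhdP]
  have hcW : (wcomp (zpowWalk R hh n) P).Chain' (· ≠ ·) := chain'_wcomp z5 hcP hlink
  have haW : Alt H d (wcomp (zpowWalk R hh n) P) :=
    alt_wcomp z6 haP z4 z1 hneP hlink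
  exact (rtg_preserve (piEq_to_red hpi hQred) hcW haW).2

lemma wcomp_zpow_zero {R P : List X} {hh : X} (hhd : P.head? = some hh) (hneP : P ≠ []) :
    wcomp (zpowWalk R hh 0) P = P := by
  have h0 : zpowWalk R hh 0 = [hh] := by
    unfold zpowWalk
    rw [if_pos le_rfl]
    rfl
  rw [h0]
  rcases P with _ | ⟨a, t⟩
  · exact absurd rfl hneP
  · have : a = hh := by simpa using hhd
    subst this
    simp [wcomp]

end AuxProof

/-- If a closed reduced even walk `R` based at `h` satisfies the IN-zigzag
pattern, then `P` satisfies the IN-zigzag pattern iff every reduced walk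
`RⁿP`, `n ∈ ℤ`, does; analogously for the OUT-zigzag pattern. -/
theorem statement12 {X : Type} (H : Dgraph X) (h : X) (b : X)
    (R P : List X)
    (hR : IsWalk H h h R) (hRred : IsReduced R) (hReven : Even (wlen R))
    (hP : IsWalk H h b P) (hPred : IsReduced P) (hPeven : Even (wlen P)) :
    (INCompatible H R →
      (INCompatible H P ↔
        ∀ (n : ℤ) (Q : List X), IsReduced Q →
          PiEq (wcomp (zpowWalk R h n) P) Q → INCompatible H Q)) ∧
    (OUTCompatible H R →
      (OUTCompatible H P ↔
        ∀ (n : ℤ) (Q : List X), IsReduced Q →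
          PiEq (wcomp (zpowWalk R h n) P) Q → OUTCompatible H Q)) := by
  constructor
  · intro hRIN
    constructor
    · intro hPIN n Q hQred hpi
      exact alt_iff_IN.mpr (main_alt hR hRred hReven hP hPred
        (alt_iff_IN.mp hRIN) (alt_iff_IN.mp hPIN) n Q hQred hpi)
    · intro hall
      exact hall 0 P hPred
        (by rw [wcomp_zpow_zero hP.2.1 hP.1]; exact Relation.EqvGen.refl _)
  · intro hROUT
    constructor
    · intro hPOUT n Q hQred hpi
      exact alt_iff_OUT.mpr (main_alt hR hRred hReven hP hPred
        (alt_iff_OUT.mp hROUT) (alt_iff_OUT.mp hPOUT) n Q hQred hpi)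
    · intro hall
      exact hall 0 P hPred
        (by rw [wcomp_zpow_zero hP.2.1 hP.1]; exact Relation.EqvGen.refl _)
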